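/- Let 0 < c < 1, s = cn, let k(n) = ⌊log_{1/(1−c)} n⌋ and α(n) = {log_{1/(1−c)} n} (the fractional part). Suppose (n_j) is an increasing sequence of integers with α(n_j) → α ∈ [0,1]. Then for each fixed integer i, the number X_{k(n_j)+i} of coupons missed after k(n_j)+i uniform s-subset draws converges in distribution to Po((1−c)^{i−α}) as j → ∞. -/

import Mathlib

open Finset Filter
open scoped Classical

noncomputable section

/-- All tuples of `i` draws, each draw being an `s`-element subset of the `n` coupons.
The drawing process is uniform on this finite set. -/
def draws (n s i : ℕ) : Finset (Fin i → Finset (Fin n)) :=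
  Finset.univ.filter (fun f => ∀ j, (f j).card = s)

/-- The probability, under `i` independent uniform `s`-subset draws from `n` coupons,
of the event `p`. -/
def pr (n s i : ℕ) (p : (Fin i → Finset (Fin n)) → Prop) : ℝ :=
  (((draws n s i).filter p).card : ℝ) / ((draws n s i).card : ℝ)

/-- The event that every coupon has appeared in at least one of the draws. -/
def collected {n i : ℕ} (f : Fin i → Finset (Fin n)) : Prop :=
  ∀ t : Fin n, ∃ j, t ∈ f j

/-- The number of coupons missed by all the draws. -/
def missed {n i : ℕ} (f : Fin i → Finset (Fin n)) : ℕ :=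
  (Finset.univ.filter (fun t : Fin n => ∀ j, t ∉ f j)).card

/-- `P(Y ≥ i)`: the probability that the collection is not complete after `i − 1` draws,
where `Y` is the number of draws needed to collect all `n` coupons. -/
def PYge (n s i : ℕ) : ℝ := pr n s (i - 1) (fun f => ¬ collected f)

/-- `P(Y ≤ i)`: the probability that the collection is complete after `i` draws. -/
def PYle (n s i : ℕ) : ℝ := pr n s i (fun f => collected f)

/-- `P(Y = i)`. -/
def PYeq (n s i : ℕ) : ℝ := PYle n s i - if i = 0 then 0 else PYle n s (i - 1)

/-- `E[Y]`, via the tail-sum formula `E[Y] = ∑_{i≥1} P(Y ≥ i) = ∑_{i≥0} P(Y > i)`. -/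
def EY (n s : ℕ) : ℝ := ∑' i : ℕ, pr n s i (fun f => ¬ collected f)

end

section Aux
variable {n s ℓ : ℕ}

def missedSet {n i : ℕ} (f : Fin i → Finset (Fin n)) : Finset (Fin n) :=
  Finset.univ.filter (fun t : Fin n => ∀ j, t ∉ f j)

lemma missed_eq {n i : ℕ} (f : Fin i → Finset (Fin n)) : missed f = (missedSet f).card := rfl

lemma subset_missedSet_iff {n i : ℕ} (f : Fin i → Finset (Fin n)) (T : Finset (Fin n)) :
    T ⊆ missedSet f ↔ ∀ j, ∀ t ∈ T, t ∉ f j := by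
  constructor
  · intro h j t ht
    have := h ht
    simp only [missedSet, mem_filter] at this
    exact this.2 j
  · intro h t ht
    simp only [missedSet, mem_filter, mem_univ, true_and]
    exact fun j => h j t ht

lemma count_avoid (n s ℓ : ℕ) (T : Finset (Fin n)) :
    ((draws n s ℓ).filter (fun f => T ⊆ missedSet f)).card
      = ((n - T.card).choose s) ^ ℓ := by
  have he : (draws n s ℓ).filter (fun f => T ⊆ missedSet f)
      = Fintype.piFinset (fun _ : Fin ℓ => (Tᶜ).powersetCard s) := by
    ext f
    simp only [draws, mem_filter, mem_univ, true_and, Fintype.mem_piFinset,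
      mem_powersetCard, subset_missedSet_iff]
    constructor
    · rintro ⟨h1, h2⟩ j
      refine ⟨fun x hx => ?_, h1 j⟩
      simp only [mem_compl]
      exact fun hxT => h2 j x hxT hx
    · intro h
      refine ⟨fun j => (h j).2, fun j t ht hf => ?_⟩
      have := (h j).1 hf
      simp only [mem_compl] at this
      exact this ht
  rw [he, Fintype.card_piFinset_const, card_powersetCard, card_compl, Fintype.card_fin]

lemma draws_card (n s ℓ : ℕ) : (draws n s ℓ).card = (n.choose s) ^ ℓ := by
  have := count_avoid n s ℓ ∅
  simpa using this

lemma sum_powerset_neg_one_pow_card_real {α : Type*} [DecidableEq α] {x : Finset α} :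
    (∑ m ∈ x.powerset, (-1 : ℝ) ^ m.card) = if x = ∅ then 1 else 0 := by
  have h := Finset.sum_powerset_neg_one_pow_card (x := x)
  have h2 : ((∑ m ∈ x.powerset, (-1 : ℤ) ^ m.card : ℤ) : ℝ)
      = ∑ m ∈ x.powerset, (-1:ℝ) ^ m.card := by push_cast; rfl
  rw [← h2, h]; split <;> simp

lemma sieve_fixed (n s ℓ : ℕ) (M : Finset (Fin n)) :
    (((draws n s ℓ).filter (fun f => missedSet f = M)).card : ℝ)
      = ∑ U ∈ (Mᶜ).powerset, (-1 : ℝ) ^ U.card *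
          (((draws n s ℓ).filter (fun f => (M ∪ U) ⊆ missedSet f)).card : ℝ) := by
  simp only [Finset.card_filter, Nat.cast_sum, Nat.cast_ite, Nat.cast_one, Nat.cast_zero,
    Finset.mul_sum]
  rw [Finset.sum_comm]
  refine Finset.sum_congr rfl fun f _ => ?_
  by_cases hM : M ⊆ missedSet f
  · have hiff : ∀ U : Finset (Fin n), (M ∪ U ⊆ missedSet f) ↔ U ⊆ missedSet f := by
      intro U; constructor
      · intro h; exact (Finset.subset_union_right).trans h
      · intro h; exact Finset.union_subset hM h
    have step1 : ∑ U ∈ (Mᶜ).powerset, (-1:ℝ) ^ U.card *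
          (if (M ∪ U) ⊆ missedSet f then (1:ℝ) else 0)
        = ∑ U ∈ (missedSet f \ M).powerset, (-1:ℝ) ^ U.card := by
      rw [← Finset.sum_filter_add_sum_filter_not ((Mᶜ).powerset)
        (fun U => U ⊆ missedSet f)]
      have h2 : ∑ U ∈ ((Mᶜ).powerset.filter (fun U => ¬ U ⊆ missedSet f)),
          (-1:ℝ) ^ U.card * (if (M ∪ U) ⊆ missedSet f then (1:ℝ) else 0) = 0 := by
        refine Finset.sum_eq_zero fun U hU => ?_
        simp only [Finset.mem_filter] at hU
        rw [if_neg, mul_zero]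
        intro hc
        exact hU.2 ((Finset.subset_union_right).trans hc)
      rw [h2, add_zero]
      have hset : (Mᶜ).powerset.filter (fun U => U ⊆ missedSet f)
          = (missedSet f \ M).powerset := by
        ext U
        simp only [Finset.mem_filter, Finset.mem_powerset, Finset.subset_iff,
          Finset.mem_sdiff, Finset.mem_compl]
        exact ⟨fun h x hx => ⟨h.2 hx, h.1 hx⟩,
          fun h => ⟨fun x hx => (h hx).2, fun x hx => (h hx).1⟩⟩
      rw [hset]
      refine Finset.sum_congr rfl fun U hU => ?_
      rw [Finset.mem_powerset] at hU
      rw [if_pos, mul_one]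
      exact Finset.union_subset hM (hU.trans (Finset.sdiff_subset))
    rw [step1, sum_powerset_neg_one_pow_card_real]
    by_cases he : missedSet f = M
    · rw [if_pos he, if_pos (by simp [he])]
    · rw [if_neg he, if_neg]
      simp only [Finset.sdiff_eq_empty_iff_subset]
      intro hc
      exact he (Finset.Subset.antisymm hc hM)
  · rw [if_neg (fun h : missedSet f = M => hM (le_of_eq h.symm))]
    · refine (Finset.sum_eq_zero fun U hU => ?_).symm
      rw [if_neg, mul_zero]
      intro hc
      exact hM ((Finset.subset_union_left).trans hc)
lemma key_count (n s ℓ k : ℕ) :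
    (((draws n s ℓ).filter (fun f => missed f = k)).card : ℝ)
      = (n.choose k : ℝ) * ∑ u ∈ range (n - k + 1),
          (-1:ℝ) ^ u * ((n-k).choose u : ℝ) * (((n - (k+u)).choose s : ℕ) : ℝ) ^ ℓ := by
  have hfib : ((draws n s ℓ).filter (fun f => missed f = k)).card
      = ∑ M ∈ Finset.univ.powersetCard k,
          (((draws n s ℓ).filter (fun f => missed f = k)).filter
            (fun f => missedSet f = M)).card := by
    refine Finset.card_eq_sum_card_fiberwise (fun f hf => ?_)
    simp only [Finset.coe_filter, Finset.mem_coe, Finset.mem_filter, Set.mem_setOf_eq] at hf ⊢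
    exact Finset.mem_powersetCard.2 ⟨Finset.subset_univ _, hf.2⟩
  have hfib2 : ∀ M ∈ Finset.univ.powersetCard (α := Fin n) k,
      (((draws n s ℓ).filter (fun f => missed f = k)).filter
            (fun f => missedSet f = M))
        = (draws n s ℓ).filter (fun f => missedSet f = M) := by
    intro M hM
    rw [Finset.filter_filter]
    refine Finset.filter_congr fun f _ => ?_
    have hMc : M.card = k := (Finset.mem_powersetCard.1 hM).2
    constructor
    · exact fun h => h.2
    · intro h
      exact ⟨by rw [missed, ← missedSet, h, hMc], h⟩
  -- inner formula for each M of card k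
  have hinner : ∀ M ∈ Finset.univ.powersetCard (α := Fin n) k,
      (((draws n s ℓ).filter (fun f => missedSet f = M)).card : ℝ)
        = ∑ u ∈ range (n - k + 1),
            (-1:ℝ) ^ u * ((n-k).choose u : ℝ) * (((n - (k+u)).choose s : ℕ) : ℝ) ^ ℓ := by
    intro M hM
    obtain ⟨-, hMc⟩ := Finset.mem_powersetCard.1 hM
    rw [sieve_fixed]
    have hcompl : (Mᶜ : Finset (Fin n)).card = n - k := by
      rw [Finset.card_compl, hMc, Fintype.card_fin]
    rw [Finset.powerset_card_biUnion, Finset.sum_biUnion (by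
      intro a _ b _ hab
      show Disjoint (Finset.powersetCard a Mᶜ) (Finset.powersetCard b Mᶜ)
      rw [Finset.disjoint_left]
      intro U h1 h2
      exact hab ((Finset.mem_powersetCard.1 h1).2.symm.trans (Finset.mem_powersetCard.1 h2).2)), hcompl]
    refine Finset.sum_congr rfl fun u hu => ?_
    have : ∀ U ∈ (Mᶜ : Finset (Fin n)).powersetCard u,
        (-1:ℝ) ^ U.card * (((draws n s ℓ).filter
            (fun f => (M ∪ U) ⊆ missedSet f)).card : ℝ)
          = (-1:ℝ) ^ u * (((n - (k+u)).choose s : ℕ) : ℝ) ^ ℓ := by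
      intro U hU
      obtain ⟨hUsub, hUc⟩ := Finset.mem_powersetCard.1 hU
      have hdisj : Disjoint M U := by
        rw [Finset.disjoint_right]
        intro a haU haM
        exact (Finset.mem_compl.1 (hUsub haU)) haM
      rw [count_avoid, Finset.card_union_of_disjoint hdisj, hMc, hUc]
      push_cast
      ring
    rw [Finset.sum_congr rfl this, Finset.sum_const, Finset.card_powersetCard, hcompl,
      nsmul_eq_mul]
    push_cast
    ring
  rw [hfib]
  push_cast
  rw [Finset.sum_congr rfl (fun M hM => by rw [hfib2 M hM])]
  rw [Finset.sum_congr rfl (fun M hM => hinner M hM), Finset.sum_const,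
    Finset.card_powersetCard, Finset.card_univ, Fintype.card_fin, nsmul_eq_mul]
end Aux

lemma choose_ratio_core {m s : ℕ} (h : s + 1 ≤ m) :
    ((m-1).choose s : ℝ) = (m.choose s : ℝ) * (((m:ℝ) - s) / m) := by
  have hm : m - 1 + 1 = m := by omega
  have h1 := Nat.choose_mul_succ_eq (m-1) s
  rw [hm] at h1
  have h2 : (((m-1).choose s * m : ℕ) : ℝ) = ((m.choose s * (m - s) : ℕ) : ℝ) := by rw [h1]
  have hsm : s ≤ m := by omega
  push_cast [Nat.cast_sub hsm] at h2
  have hm0 : (0:ℝ) < m := by exact_mod_cast (by omega : 0 < m)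
  field_simp
  linarith [h2]

lemma ratio_prod (n s : ℕ) : ∀ r, s + r ≤ n →
    (((n - r).choose s : ℝ)) = (n.choose s : ℝ) *
      ∏ t ∈ Finset.range r, (((n:ℝ) - s - t) / ((n:ℝ) - t)) := by
  intro r
  induction r with
  | zero => simp
  | succ r IH =>
    intro h
    have hr : s + r ≤ n := by omega
    have he : n - (r+1) = (n - r) - 1 := by omega
    have hc1 : ((n - r : ℕ) : ℝ) = (n:ℝ) - r := by
      rw [Nat.cast_sub (by omega)]
    rw [he, choose_ratio_core (m := n - r) (by omega), IH hr, Finset.prod_range_succ, hc1]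
    ring

lemma ratio_le (n s : ℕ) (hs : s ≤ n) (hn : 0 < n) : ∀ m : ℕ,
    ((n - m).choose s : ℝ) ≤ (((n:ℝ) - s) / n) ^ m * (n.choose s) := by
  have hnum : (0:ℝ) ≤ ((n:ℝ) - s) / n := by
    apply div_nonneg _ (by positivity)
    have : (s:ℝ) ≤ n := by exact_mod_cast hs
    linarith
  intro m
  induction m with
  | zero => simp
  | succ m IH =>
    by_cases hc : s + 1 ≤ n - m
    · have he : n - (m+1) = (n - m) - 1 := by omega
      have key := choose_ratio_core (m := n - m) hc
      rw [he, key]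
      have hnm : ((n - m : ℕ) : ℝ) = (n:ℝ) - m := by rw [Nat.cast_sub (by omega)]
      have hnm0 : (0:ℝ) < ((n - m:ℕ) : ℝ) := by
        have : 0 < n - m := by omega
        exact_mod_cast this
      have hfn : (0:ℝ) ≤ (((n - m:ℕ):ℝ) - s) / ((n - m:ℕ):ℝ) := by
        apply div_nonneg _ (le_of_lt hnm0)
        have : (s:ℝ) ≤ ((n-m:ℕ):ℝ) := by exact_mod_cast (by omega : s ≤ n - m)
        linarith
      have hfrac : (((n - m:ℕ):ℝ) - s) / ((n - m:ℕ):ℝ) ≤ ((n:ℝ) - s) / n := by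
        rw [div_le_div_iff₀ hnm0 (by positivity)]
        have h1 : ((n-m:ℕ):ℝ) ≤ (n:ℝ) := by exact_mod_cast (by omega : n - m ≤ n)
        have h2 : (0:ℝ) ≤ (s:ℝ) := by positivity
        nlinarith
      calc ((n - m).choose s : ℝ) * ((((n - m:ℕ):ℝ) - s) / ((n - m:ℕ):ℝ))
          ≤ ((((n:ℝ) - s)/n)^m * (n.choose s)) * (((n:ℝ) - s)/n) := by
            apply mul_le_mul IH hfrac hfn
            positivity
        _ = (((n:ℝ) - s)/n)^(m+1) * (n.choose s) := by ring
    · rcases Nat.eq_zero_or_pos s with hs0 | hs0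
      · subst hs0
        have hone : ((n:ℝ) - ((0:ℕ):ℝ)) / n = 1 := by
          have : (0:ℝ) < n := by exact_mod_cast hn
          rw [Nat.cast_zero, sub_zero, div_self (ne_of_gt this)]
        simp only [Nat.cast_zero, sub_zero] at hone
        simp [hone]
      · have hz : (n - (m+1)).choose s = 0 := Nat.choose_eq_zero_of_lt (by omega)
        rw [hz]
        push_cast
        positivity

lemma choose_cast_prod (n r : ℕ) (h : r ≤ n) :
    (n.choose r : ℝ) = (∏ t ∈ Finset.range r, ((n:ℝ) - t)) / r.factorial := by
  have h1 := Nat.descFactorial_eq_factorial_mul_choose n r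
  have h2 : ((n.descFactorial r : ℕ) : ℝ) = ∏ t ∈ Finset.range r, ((n:ℝ) - t) := by
    rw [Nat.descFactorial_eq_prod_range]
    push_cast
    refine Finset.prod_congr rfl fun t ht => ?_
    rw [Nat.cast_sub (le_of_lt (lt_of_lt_of_le (Finset.mem_range.1 ht) h))]
  have h3 : ((n.descFactorial r : ℕ) : ℝ) = (r.factorial : ℝ) * (n.choose r : ℝ) := by
    exact_mod_cast congrArg Nat.cast h1
  rw [h3] at h2
  field_simp at h2 ⊢
  linarith [h2]

lemma choose_le_pow_real (n r : ℕ) : (n.choose r : ℝ) ≤ (n:ℝ)^r / r.factorial := by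
  rw [le_div_iff₀ (by positivity)]
  have h1 : n.choose r * r.factorial ≤ n ^ r := by
    rw [mul_comm, ← Nat.descFactorial_eq_factorial_mul_choose]
    exact Nat.descFactorial_le_pow n r
  calc ((n.choose r : ℝ)) * r.factorial = ((n.choose r * r.factorial : ℕ) : ℝ) := by push_cast; ring
    _ ≤ ((n ^ r : ℕ) : ℝ) := by exact_mod_cast h1
    _ = (n:ℝ)^r := by push_cast; ring

lemma chooseid (n k u : ℕ) :
    n.choose k * (n - k).choose u = n.choose (k+u) * (k+u).choose k := by
  by_cases h : k + u ≤ n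
  · have := Nat.choose_mul (n := n) (k := k + u) (s := k) (by omega)
    rw [Nat.add_sub_cancel_left] at this
    omega
  · rw [Nat.choose_eq_zero_of_lt (by omega : n < k + u), Nat.zero_mul]
    by_cases hk : k ≤ n
    · rw [Nat.choose_eq_zero_of_lt (by omega : n - k < u), Nat.mul_zero]
    · rw [Nat.choose_eq_zero_of_lt (by omega : n < k), Nat.zero_mul]

lemma lemD_abstract (c : ℝ) (hc : 0 < c) (hc1 : c < 1) (nj : ℕ → ℕ) (s : ℕ → ℕ)
    (hs : ∀ j, (s j : ℝ) = c * nj j) (ℓ : ℕ → ℕ) (μ : ℝ)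
    (hnj : Tendsto (fun j => (nj j : ℝ)) atTop atTop)
    (hμ : Tendsto (fun j => (nj j : ℝ) * (1-c) ^ (ℓ j)) atTop (nhds μ))
    (hℓn : Tendsto (fun j => (ℓ j : ℝ) / (nj j)) atTop (nhds 0))
    (r : ℕ) :
    Tendsto (fun j => ((nj j).choose r : ℝ) *
      ((((nj j) - r).choose (s j) : ℝ) / ((nj j).choose (s j) : ℝ)) ^ ℓ j)
      atTop (nhds (μ ^ r / r.factorial)) := by
  have h1c : (0:ℝ) < 1 - c := by linarith
  -- eventual largeness
  have hev : ∀ᶠ j in atTop, (r : ℝ) ≤ (1-c) * nj j ∧ (2*r + 1 : ℝ) ≤ nj j := by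
    have h2 : ∀ᶠ j in atTop, ((r:ℝ)/(1-c)) ≤ (nj j : ℝ) := hnj.eventually_ge_atTop _
    have h3 : ∀ᶠ j in atTop, (2*r+1 : ℝ) ≤ (nj j : ℝ) := hnj.eventually_ge_atTop _
    filter_upwards [h2, h3] with j h2 h3
    rw [div_le_iff₀ h1c] at h2
    exact ⟨by linarith, h3⟩
  -- the per-factor convergence
  have hfac : ∀ t ∈ Finset.range r, Tendsto
      (fun j => ((nj j : ℝ) - t) *
        (((nj j : ℝ) - s j - t) / ((nj j : ℝ) - t)) ^ ℓ j) atTop (nhds μ) := by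
    intro t ht
    have htr : (t:ℝ) < r := by exact_mod_cast Finset.mem_range.1 ht
    set K : ℝ := 2 * c * t / (1 - c) with hK
    have hK0 : 0 ≤ K := div_nonneg (by positivity) (le_of_lt h1c)
    -- gamma function
    set γ : ℕ → ℝ := fun j => ((1-c) * nj j - t) / ((1-c) * ((nj j : ℝ) - t)) with hγ
    have hγev : ∀ᶠ j in atTop, 1 - (ℓ j : ℝ) * (K / nj j) ≤ γ j ^ ℓ j ∧ γ j ^ ℓ j ≤ 1 := by
      have hKn : ∀ᶠ j in atTop, K / (nj j : ℝ) ≤ 1 := by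
        rcases eq_or_lt_of_le hK0 with h | h
        · filter_upwards [hnj.eventually_gt_atTop 0] with j hj
          rw [← h, zero_div]; norm_num
        · filter_upwards [hnj.eventually_ge_atTop K, hnj.eventually_gt_atTop 0] with j h1 h2
          rw [div_le_one h2]; exact h1
      filter_upwards [hev, hKn] with j hj hKn
      obtain ⟨hj1, hj2⟩ := hj
      have hn0 : (0:ℝ) < nj j := by linarith
      have hnt : (t:ℝ) < nj j := by linarith
      have hdenpos : (0:ℝ) < (1-c) * ((nj j : ℝ) - t) := by
        apply mul_pos h1c; linarith
      have hnum0 : (0:ℝ) ≤ (1-c) * nj j - t := by linarith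
      have hγ0 : 0 ≤ γ j := div_nonneg hnum0 (le_of_lt hdenpos)
      have hγ1 : γ j ≤ 1 := by
        rw [hγ, div_le_one hdenpos]
        nlinarith [htr]
      have hγlb : 1 - K / nj j ≤ γ j := by
        have e1 : 1 - γ j = c * t / ((1-c) * ((nj j:ℝ) - t)) := by
          rw [hγ]
          beta_reduce
          rw [eq_div_iff hdenpos.ne', sub_mul, div_mul_cancel₀ _ hdenpos.ne']
          ring
        have hKc : K * (1 - c) = 2 * c * t := by
          rw [hK]; field_simp
        have e2 : c * t / ((1-c) * ((nj j:ℝ) - t)) ≤ K / nj j := by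
          rw [div_le_div_iff₀ hdenpos hn0]
          have hf1 : (0:ℝ) ≤ c * t := by positivity
          have hf2 : (0:ℝ) ≤ (nj j : ℝ) - 2 * t := by linarith
          nlinarith [mul_nonneg hf1 hf2]
        linarith
      constructor
      · calc 1 - (ℓ j : ℝ) * (K / nj j) = 1 + (ℓ j : ℝ) * (-(K / nj j)) := by ring
          _ ≤ (1 + -(K / nj j)) ^ ℓ j := by
              apply one_add_mul_le_pow
              have : 0 ≤ K / nj j := by positivity
              linarith
          _ = (1 - K / nj j) ^ ℓ j := by ring_nf
          _ ≤ γ j ^ ℓ j := by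
              apply pow_le_pow_left₀ (by linarith) hγlb
      · exact pow_le_one₀ hγ0 hγ1
    have hγlim : Tendsto (fun j => γ j ^ ℓ j) atTop (nhds 1) := by
      have hlow : Tendsto (fun j => 1 - (ℓ j : ℝ) * (K / nj j)) atTop (nhds 1) := by
        have : Tendsto (fun j => (ℓ j : ℝ) * (K / nj j)) atTop (nhds 0) := by
          have h2 : Tendsto (fun j => ((ℓ j : ℝ) / nj j) * K) atTop (nhds (0 * K)) :=
            hℓn.mul_const K
          rw [zero_mul] at h2
          apply h2.congr'
          filter_upwards [hnj.eventually_gt_atTop 0] with j hj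
          field_simp
        simpa using tendsto_const_nhds.sub this
      refine tendsto_of_tendsto_of_tendsto_of_le_of_le' hlow tendsto_const_nhds
        (hγev.mono fun j h => h.1) (hγev.mono fun j h => h.2)
    have h1t : Tendsto (fun j => 1 - (t:ℝ) / nj j) atTop (nhds 1) := by
      simpa using tendsto_const_nhds.sub (tendsto_const_nhds.div_atTop hnj (f := fun _ => (t:ℝ)))
    have hprod : Tendsto (fun j => ((nj j : ℝ) * (1-c) ^ (ℓ j)) *
        ((1 - (t:ℝ)/nj j) * γ j ^ ℓ j)) atTop (nhds (μ * (1 * 1))) :=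
      hμ.mul (h1t.mul hγlim)
    rw [mul_one, mul_one] at hprod
    apply hprod.congr'
    filter_upwards [hev] with j hj
    obtain ⟨hj1, hj2⟩ := hj
    have hn0 : (0:ℝ) < nj j := by linarith
    have hnt : (0:ℝ) < (nj j : ℝ) - t := by linarith
    have hsubst : (nj j : ℝ) - s j - t = (1-c) * nj j - t := by rw [hs]; ring
    rw [hsubst]
    have hfrac : ((1-c) * nj j - t) / ((nj j : ℝ) - t) = (1-c) * γ j := by
      rw [hγ]
      field_simp
    rw [hfrac, mul_pow]
    field_simp
  -- assemble product
  have hr : Tendsto (fun j => ∏ t ∈ Finset.range r,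
      (((nj j : ℝ) - t) * (((nj j : ℝ) - s j - t) / ((nj j : ℝ) - t)) ^ ℓ j))
      atTop (nhds (∏ _t ∈ Finset.range r, μ)) := tendsto_finset_prod _ hfac
  rw [Finset.prod_const, Finset.card_range] at hr
  have := hr.div_const (r.factorial : ℝ)
  apply this.congr'
  filter_upwards [hev] with j hj
  obtain ⟨hj1, hj2⟩ := hj
  have hn0 : (0:ℝ) < nj j := by linarith
  have hsr : s j + r ≤ nj j := by
    have h1 : (s j : ℝ) + r ≤ nj j := by rw [hs]; nlinarith
    exact_mod_cast h1
  have hrn : r ≤ nj j := by omega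
  have hsn : s j ≤ nj j := by omega
  have hchoose0 : (0:ℝ) < ((nj j).choose (s j) : ℝ) := by
    exact_mod_cast Nat.choose_pos hsn
  rw [ratio_prod (nj j) (s j) r hsr, choose_cast_prod (nj j) r hrn,
    mul_div_cancel_left₀ _ (ne_of_gt hchoose0), ← Finset.prod_pow,
    div_mul_eq_mul_div, ← Finset.prod_mul_distrib]

lemma setup_lemma (c : ℝ) (hc : 0 < c) (hc1 : c < 1)
    (nj : ℕ → ℕ) (hmono : StrictMono nj) (i : ℤ) (α : ℝ)
    (hconv : Tendsto (fun j => Int.fract (Real.logb (1 / (1 - c)) (nj j)))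
      atTop (nhds α)) :
    Tendsto (fun j => (nj j : ℝ)) atTop atTop ∧
    Tendsto (fun j => (nj j : ℝ) *
      (1-c) ^ ((⌊Real.logb (1 / (1 - c)) (nj j)⌋ + i).toNat)) atTop
      (nhds ((1-c) ^ ((i:ℝ) - α))) ∧
    Tendsto (fun j => (((⌊Real.logb (1 / (1 - c)) (nj j)⌋ + i).toNat : ℝ)) / (nj j))
      atTop (nhds 0) ∧
    (∀ᶠ j in atTop, (nj j : ℝ) *
      (1-c) ^ ((⌊Real.logb (1 / (1 - c)) (nj j)⌋ + i).toNat)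
        ≤ (1-c) ^ ((i:ℝ) - 1)) := by
  have h1c : (0:ℝ) < 1 - c := by linarith
  set b : ℝ := 1 / (1 - c) with hbdef
  have hb : 1 < b := one_lt_one_div h1c (by linarith)
  have hb0 : 0 < b := by linarith
  set L : ℕ → ℝ := fun j => Real.logb b (nj j) with hLdef
  set ℓ : ℕ → ℕ := fun j => (⌊L j⌋ + i).toNat with hℓdef
  have hnj : Tendsto (fun j => (nj j : ℝ)) atTop atTop :=
    tendsto_natCast_atTop_atTop.comp hmono.tendsto_atTop
  have hL : Tendsto L atTop atTop := (Real.tendsto_logb_atTop hb).comp hnj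
  have hfloor : Tendsto (fun j => ⌊L j⌋) atTop atTop := tendsto_floor_atTop.comp hL
  have hev0 : ∀ᶠ j in atTop, 0 ≤ ⌊L j⌋ + i := by
    filter_upwards [hfloor.eventually_ge_atTop (-i)] with j hj
    omega
  have hℓcast : ∀ᶠ j in atTop, ((ℓ j : ℕ) : ℝ) = (⌊L j⌋ : ℝ) + (i : ℝ) := by
    filter_upwards [hev0] with j hj
    rw [hℓdef]
    have : (((⌊L j⌋ + i).toNat : ℤ) : ℝ) = ((⌊L j⌋ + i : ℤ) : ℝ) := by
      rw [Int.toNat_of_nonneg hj]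
    push_cast at this ⊢
    linarith [this]
  have hμform : ∀ᶠ j in atTop, (nj j : ℝ) * (1-c) ^ (ℓ j)
      = (1-c) ^ ((i:ℝ) - Int.fract (L j)) := by
    filter_upwards [hℓcast, hnj.eventually_gt_atTop 0] with j hjc hj0
    have hnjr : (nj j : ℝ) = b ^ (L j) :=
      (Real.rpow_logb hb0 (ne_of_gt hb) hj0).symm
    have hbinv : b ^ (L j) = (1-c) ^ (-(L j)) := by
      rw [hbdef, one_div, Real.inv_rpow (le_of_lt h1c), ← Real.rpow_neg (le_of_lt h1c)]
    have hpow : ((1-c) : ℝ) ^ (ℓ j : ℕ) = (1-c) ^ ((ℓ j : ℝ)) :=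
      (Real.rpow_natCast _ _).symm
    rw [hnjr, hbinv, hpow, hjc, ← Real.rpow_add h1c]
    rw [Int.fract]
    ring_nf
  have hμ : Tendsto (fun j => (nj j : ℝ) * (1-c) ^ (ℓ j)) atTop
      (nhds ((1-c) ^ ((i:ℝ) - α))) := by
    have htarget : Tendsto (fun j => ((1-c):ℝ) ^ ((i:ℝ) - Int.fract (L j))) atTop
        (nhds ((1-c) ^ ((i:ℝ) - α))) :=
      Filter.Tendsto.rpow tendsto_const_nhds (tendsto_const_nhds.sub hconv)
        (Or.inl (ne_of_gt h1c))
    exact htarget.congr' (hμform.mono fun j h => h.symm)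
  have hbound : ∀ᶠ j in atTop, (nj j : ℝ) * (1-c) ^ (ℓ j) ≤ (1-c) ^ ((i:ℝ) - 1) := by
    filter_upwards [hμform] with j hj
    rw [hj]
    apply Real.rpow_le_rpow_of_exponent_ge h1c (by linarith)
    have := Int.fract_lt_one (L j)
    linarith
  have hℓn : Tendsto (fun j => ((ℓ j : ℕ) : ℝ) / (nj j)) atTop (nhds 0) := by
    have hlogb : (0:ℝ) < Real.log b := Real.log_pos hb
    have hll : Tendsto (fun x : ℝ => Real.log x / x) atTop (nhds 0) :=
      Real.isLittleO_log_id_atTop.tendsto_div_nhds_zero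
    have h1 : Tendsto (fun j => Real.log (nj j) / (nj j)) atTop (nhds 0) :=
      hll.comp hnj
    have h2 : Tendsto (fun j => (Real.log (nj j) / (nj j)) * (1 / Real.log b)
        + (|(i:ℝ)| + 1) / (nj j)) atTop (nhds (0 * (1 / Real.log b) + 0)) :=
      (h1.mul_const _).add (tendsto_const_nhds.div_atTop hnj)
    rw [zero_mul, add_zero] at h2
    apply tendsto_of_tendsto_of_tendsto_of_le_of_le' tendsto_const_nhds h2
    · filter_upwards [hnj.eventually_gt_atTop 0] with j hj
      positivity
    · filter_upwards [hℓcast, hnj.eventually_gt_atTop 0] with j hjc hj0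
      rw [hjc]
      have hfl : ((⌊L j⌋ : ℝ)) ≤ L j := Int.floor_le _
      have hLval : L j = Real.log (nj j) / Real.log b := by simp only [hLdef, Real.logb]
      have hle : (⌊L j⌋ : ℝ) + i ≤ L j + (|(i:ℝ)| + 1) := by
        have : (i:ℝ) ≤ |(i:ℝ)| := le_abs_self _
        linarith
      have h3 : ((⌊L j⌋:ℝ) + i) / nj j ≤ (L j + (|(i:ℝ)|+1)) / nj j :=
        (div_le_div_iff_of_pos_right hj0).mpr hle
      have h4 : (L j + (|(i:ℝ)|+1)) / nj j
          = Real.log (nj j) / (nj j) * (1 / Real.log b) + (|(i:ℝ)|+1) / nj j := by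
        rw [hLval]
        field_simp
      linarith
  exact ⟨hnj, hμ, hℓn, hbound⟩

/-- Case II: with `s = cn` along a sequence `n_j` with fractional part
`α(n_j) = {log_{1/(1−c)} n_j} → α`, the number of coupons missed after
`⌊log_{1/(1−c)} n_j⌋ + i` draws converges in distribution to `Po((1−c)^{i−α})`. -/
theorem stmt17 (c : ℝ) (hc : 0 < c) (hc1 : c < 1)
    (nj : ℕ → ℕ) (hmono : StrictMono nj) (s : ℕ → ℕ)
    (hs : ∀ j, (s j : ℝ) = c * nj j)
    (α : ℝ) (hα : α ∈ Set.Icc (0 : ℝ) 1)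
    (hconv : Tendsto (fun j => Int.fract (Real.logb (1 / (1 - c)) (nj j)))
      atTop (nhds α))
    (i : ℤ) :
    ∀ k : ℕ,
      Tendsto
        (fun j => pr (nj j) (s j)
            ((⌊Real.logb (1 / (1 - c)) (nj j)⌋ + i).toNat)
            (fun f => missed f = k))
        atTop
        (nhds (Real.exp (-((1 - c) ^ ((i : ℝ) - α)))
          * ((1 - c) ^ ((i : ℝ) - α)) ^ k / (k.factorial : ℝ))) := by
  intro k
  have h1c : (0:ℝ) < 1 - c := by linarith
  obtain ⟨hnj, hμ, hℓn, hbound⟩ := setup_lemma c hc hc1 nj hmono i α hconv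
  set ℓ : ℕ → ℕ := fun j => (⌊Real.logb (1 / (1 - c)) (nj j)⌋ + i).toNat with hℓdef
  set μ : ℝ := (1-c) ^ ((i:ℝ) - α) with hμdef
  set M : ℝ := (1-c) ^ ((i:ℝ) - 1) with hMdef
  have hM0 : 0 ≤ M := le_of_lt (Real.rpow_pos_of_pos h1c _)
  have hsn : ∀ j, s j ≤ nj j := by
    intro j
    have h1 : (s j : ℝ) ≤ (nj j : ℝ) := by
      rw [hs j]
      nlinarith [(Nat.cast_nonneg (nj j) : (0:ℝ) ≤ (nj j : ℝ))]
    exact_mod_cast h1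
  -- the summand family
  set F : ℕ → ℕ → ℝ := fun j u => (-1:ℝ)^u * ((nj j).choose k : ℝ) *
      (((nj j) - k).choose u : ℝ) *
      (((((nj j) - (k+u)).choose (s j) : ℕ) : ℝ) / (((nj j).choose (s j) : ℕ) : ℝ)) ^ (ℓ j)
    with hFdef
  -- Step A : pr = tsum F
  have hA : ∀ j, pr (nj j) (s j) (ℓ j) (fun f => missed f = k) = ∑' u, F j u := by
    intro j
    have hvanish : ∀ u ∉ Finset.range ((nj j) - k + 1), F j u = 0 := by
      intro u hu
      rw [Finset.mem_range] at hu
      have : ((nj j) - k) < u := by omega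
      rw [hFdef]
      simp [Nat.choose_eq_zero_of_lt this]
    rw [tsum_eq_sum hvanish]
    unfold pr
    rw [Finset.filter_congr_decidable, key_count, draws_card]
    have hC0 : (0:ℝ) < (((nj j).choose (s j) : ℕ) : ℝ) := by
      exact_mod_cast Nat.choose_pos (hsn j)
    push_cast
    rw [mul_div_assoc, Finset.sum_div]
    rw [Finset.mul_sum]
    refine Finset.sum_congr rfl fun u hu => ?_
    simp only [hFdef, div_pow]
    field_simp
  -- Step B : termwise limits
  have hB : ∀ u : ℕ, Tendsto (fun j => F j u) atTop
      (nhds ((-1:ℝ)^u * μ ^ (k+u) / ((k.factorial : ℝ) * (u.factorial : ℝ)))) := by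
    intro u
    have hD := lemD_abstract c hc hc1 nj s hs ℓ μ hnj hμ hℓn (k+u)
    have hfact : (((k+u).choose k : ℕ) : ℝ) * ((k.factorial : ℝ) * (u.factorial : ℝ))
        = ((k+u).factorial : ℝ) := by
      have h1 := Nat.choose_mul_factorial_mul_factorial (Nat.le_add_right k u)
      have h2 : k + u - k = u := by omega
      rw [h2] at h1
      rw [← mul_assoc]
      exact_mod_cast congrArg Nat.cast h1
    have hlim := hD.const_mul ((-1:ℝ)^u * (((k+u).choose k : ℕ) : ℝ))
    have heq : ∀ j, ((-1:ℝ)^u * (((k+u).choose k : ℕ) : ℝ)) *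
        (((nj j).choose (k+u) : ℝ) *
          ((((nj j) - (k+u)).choose (s j) : ℝ) / ((nj j).choose (s j) : ℝ)) ^ ℓ j)
        = F j u := by
      intro j
      rw [hFdef]
      have hid : (((nj j).choose k * ((nj j) - k).choose u : ℕ) : ℝ)
          = (((nj j).choose (k+u) * ((k+u)).choose k : ℕ) : ℝ) := by
        rw [chooseid]
      push_cast at hid
      calc ((-1:ℝ)^u * (((k+u).choose k : ℕ) : ℝ)) *
          (((nj j).choose (k+u) : ℝ) *
            ((((nj j) - (k+u)).choose (s j) : ℝ) / ((nj j).choose (s j) : ℝ)) ^ ℓ j)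
          = (((nj j).choose (k+u) : ℝ) * (((k+u)).choose k : ℝ)) *
            ((-1:ℝ)^u * ((((nj j) - (k+u)).choose (s j) : ℝ) / ((nj j).choose (s j) : ℝ)) ^ ℓ j) := by
            ring
        _ = (((nj j).choose k : ℝ) * ((((nj j) - k)).choose u : ℝ)) *
            ((-1:ℝ)^u * ((((nj j) - (k+u)).choose (s j) : ℝ) / ((nj j).choose (s j) : ℝ)) ^ ℓ j) := by
            rw [hid]
        _ = _ := by ring
    have hval : ((-1:ℝ)^u * (((k+u).choose k : ℕ) : ℝ)) * (μ ^ (k+u) / ((k+u).factorial : ℝ))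
        = (-1:ℝ)^u * μ ^ (k+u) / ((k.factorial : ℝ) * (u.factorial : ℝ)) := by
      rw [← hfact]
      have hc0 : (((k+u).choose k : ℕ) : ℝ) ≠ 0 := by
        have := Nat.choose_pos (Nat.le_add_right k u)
        positivity
      field_simp
    rw [← hval]
    exact hlim.congr heq
  -- Step C : uniform bound
  have hC : ∀ᶠ j in atTop, ∀ u : ℕ,
      |F j u| ≤ M ^ (k+u) / ((k.factorial : ℝ) * (u.factorial : ℝ)) := by
    filter_upwards [hbound, hnj.eventually_gt_atTop 0] with j hbj hj0 u
    have hn0 : 0 < nj j := by exact_mod_cast hj0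
    have hC0 : (0:ℝ) < (((nj j).choose (s j) : ℕ) : ℝ) := by
      exact_mod_cast Nat.choose_pos (hsn j)
    set q : ℝ := ((((nj j) - (k+u)).choose (s j) : ℕ) : ℝ) / (((nj j).choose (s j) : ℕ) : ℝ)
      with hqdef
    have hq0 : 0 ≤ q := by positivity
    have hratio : ((nj j : ℝ) - s j) / (nj j) = 1 - c := by
      rw [hs j]
      field_simp
    have hqle : q ≤ (1-c) ^ (k+u) := by
      rw [hqdef, div_le_iff₀ hC0]
      have := ratio_le (nj j) (s j) (hsn j) hn0 (k+u)
      rw [hratio] at this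
      exact this
    have habs : |F j u| = ((nj j).choose k : ℝ) * (((nj j) - k).choose u : ℝ) * q ^ (ℓ j) := by
      rw [hFdef]
      rw [abs_mul, abs_mul, abs_mul, abs_pow, abs_neg, abs_one, one_pow, one_mul]
      rw [abs_of_nonneg (by positivity : (0:ℝ) ≤ ((nj j).choose k : ℝ)),
        abs_of_nonneg (by positivity : (0:ℝ) ≤ (((nj j) - k).choose u : ℝ)),
        abs_of_nonneg (by positivity : (0:ℝ) ≤ q ^ (ℓ j))]
    rw [habs]
    have hid : ((nj j).choose k : ℝ) * (((nj j) - k).choose u : ℝ)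
        = ((nj j).choose (k+u) : ℝ) * (((k+u)).choose k : ℝ) := by
      exact_mod_cast congrArg Nat.cast (chooseid (nj j) k u)
    rw [hid]
    have hqpow : q ^ (ℓ j) ≤ ((1-c) ^ (ℓ j)) ^ (k+u) := by
      calc q ^ (ℓ j) ≤ ((1-c) ^ (k+u)) ^ (ℓ j) := pow_le_pow_left₀ hq0 hqle _
        _ = ((1-c) ^ (ℓ j)) ^ (k+u) := by rw [← pow_mul, ← pow_mul, Nat.mul_comm]
    have hch : ((nj j).choose (k+u) : ℝ) ≤ (nj j : ℝ)^(k+u) / ((k+u).factorial : ℝ) :=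
      choose_le_pow_real (nj j) (k+u)
    have hfact : (((k+u).choose k : ℕ) : ℝ) * ((k.factorial : ℝ) * (u.factorial : ℝ))
        = ((k+u).factorial : ℝ) := by
      have h1 := Nat.choose_mul_factorial_mul_factorial (Nat.le_add_right k u)
      have h2 : k + u - k = u := by omega
      rw [h2] at h1
      rw [← mul_assoc]
      exact_mod_cast congrArg Nat.cast h1
    have hμj0 : (0:ℝ) ≤ (nj j : ℝ) * (1-c) ^ (ℓ j) := by positivity
    calc ((nj j).choose (k+u) : ℝ) * (((k+u)).choose k : ℝ) * q ^ (ℓ j)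
        ≤ ((nj j : ℝ)^(k+u) / ((k+u).factorial : ℝ)) * (((k+u)).choose k : ℝ)
            * (((1-c) ^ (ℓ j)) ^ (k+u)) := by
          apply mul_le_mul
          · apply mul_le_mul hch (le_refl _) (by positivity) (by positivity)
          · exact hqpow
          · positivity
          · positivity
      _ = ((nj j : ℝ) * (1-c) ^ (ℓ j)) ^ (k+u) / ((k.factorial : ℝ) * (u.factorial : ℝ)) := by
          rw [← hfact, mul_pow]
          have hc0 : (((k+u).choose k : ℕ) : ℝ) ≠ 0 := by
            have := Nat.choose_pos (Nat.le_add_right k u)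
            positivity
          field_simp
      _ ≤ M ^ (k+u) / ((k.factorial : ℝ) * (u.factorial : ℝ)) := by
          gcongr
  -- Step D : summable bound
  have hsum : Summable (fun u : ℕ => M ^ (k+u) / ((k.factorial : ℝ) * (u.factorial : ℝ))) := by
    have h1 : Summable (fun u : ℕ => (M^k / (k.factorial : ℝ)) * (M ^ u / (u.factorial : ℝ))) :=
      (Real.summable_pow_div_factorial M).mul_left _
    refine h1.congr fun u => ?_
    rw [pow_add]
    ring
  have hten : Tendsto (fun j => ∑' u, F j u) atTop
      (nhds (∑' u : ℕ, (-1:ℝ)^u * μ ^ (k+u) / ((k.factorial : ℝ) * (u.factorial : ℝ)))) :=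
    tendsto_tsum_of_dominated_convergence hsum hB (hC.mono fun j h u => by
      rw [Real.norm_eq_abs]; exact h u)
  -- Step E : identify the limit
  have hlimval : (∑' u : ℕ, (-1:ℝ)^u * μ ^ (k+u) / ((k.factorial : ℝ) * (u.factorial : ℝ)))
      = Real.exp (-μ) * μ ^ k / (k.factorial : ℝ) := by
    have hterm : ∀ u : ℕ, (-1:ℝ)^u * μ ^ (k+u) / ((k.factorial : ℝ) * (u.factorial : ℝ))
        = (μ^k / (k.factorial : ℝ)) * ((-μ)^u / (u.factorial : ℝ)) := by
      intro u
      rw [pow_add, neg_pow]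
      ring
    rw [tsum_congr hterm, tsum_mul_left]
    have hexp : (∑' u : ℕ, ((-μ)^u / (u.factorial : ℝ))) = Real.exp (-μ) := by
      rw [Real.exp_eq_exp_ℝ, NormedSpace.exp_eq_tsum_div]
    rw [hexp]
    ring
  have hfinal := hten.congr (fun j => (hA j).symm)
  rwa [hlimval] at hfinal
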